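/- Let T : [0,1] → [0,1] be a piecewise two-to-one interval map in the class 𝒥 (left branch x(1 + V(x)) on [0,c] with V continuous, increasing, regularly varying at 0 with index σ > 0; right branch uniformly expanding with factor λ > 1; lim_{x→c⁻}T(x)=1, lim_{x→c⁺}T(x)=0), let ω be a concave modulus satisfying Assumption A, and let Ω be the associated concave modulus of continuity (as in the appendix construction) for which the backward-orbit shadowing property with constants ρ_{T,ω} > 0 and C₈ > 0 holds. Let f ∈ C^ω([0,1]) and for k ≥ 1 define g_k(x) := sup{ S_k(f − m(f,T))(y) : T^k(y) = x }, where S_k φ = φ + φ∘T + … + φ∘T^{k−1}. Then there exists L = L(ρ_{T,ω}) > 0 such that for every k ≥ 1: (i) |g_k(x) − g_k(y)| ≤ L C₈⁻¹ |f|_ω Ω(|x − y|) for all x, y ∈ [0,1], and (ii) |g_k(x)| ≤ 2 L C₈⁻¹ |f|_ω Ω(1) for all x ∈ [0,1], where |f|_ω := sup_{x≠y} |f(x) − f(y)|/ω(|x − y|). -/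

import Mathlib

open MeasureTheory Set Filter Topology Real

noncomputable section

/-- A `T`-invariant Borel probability measure concentrated on `[0,1]`. -/
def InvariantProb (T : ℝ → ℝ) (μ : Measure ℝ) : Prop :=
  IsProbabilityMeasure μ ∧ μ (Set.Icc 0 1) = 1 ∧ μ.map T = μ

/-- The maximum ergodic average `m(f,T)` over invariant probability measures on `[0,1]`. -/
noncomputable def ergMax (T f : ℝ → ℝ) : ℝ :=
  sSup {r : ℝ | ∃ μ : Measure ℝ, InvariantProb T μ ∧ r = ∫ x, f x ∂μ}

/-- A concave modulus of continuity. -/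
def ConcaveModulus (ω : ℝ → ℝ) : Prop :=
  ContinuousOn ω (Set.Ici 0) ∧ MonotoneOn ω (Set.Ici 0) ∧ ω 0 = 0 ∧
    (∀ x, 0 ≤ x → 0 ≤ ω x) ∧ ConcaveOn ℝ (Set.Ici 0) ω

/-- `V` is regularly varying at `0` with index `σ`. -/
def RegVary0 (V : ℝ → ℝ) (σ : ℝ) : Prop :=
  ∀ t > (0:ℝ), Tendsto (fun x => V (t * x) / V x) (𝓝[>] 0) (𝓝 (t ^ σ))

/-- The seminorm `|f|_ω = sup_{x ≠ y} |f x - f y| / ω |x - y|` over `[0,1]`. -/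
noncomputable def omegaSeminorm (ω f : ℝ → ℝ) : ℝ :=
  sSup {q : ℝ | ∃ x ∈ Set.Icc (0:ℝ) 1, ∃ y ∈ Set.Icc (0:ℝ) 1, x ≠ y ∧
    q = |f x - f y| / ω |x - y|}

/-- `g_k(x) = sup { S_k (f - m(f,T))(y) : y ∈ [0,1], T^k y = x }`. -/
noncomputable def gSup (T f : ℝ → ℝ) (k : ℕ) (x : ℝ) : ℝ :=
  sSup {r : ℝ | ∃ y ∈ Set.Icc (0:ℝ) 1, T^[k] y = x ∧
    r = ∑ j ∈ Finset.range k, (f (T^[j] y) - ergMax T f)}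

private lemma gSup_def' (T f : ℝ → ℝ) (k : ℕ) (x : ℝ) :
    gSup T f k x = sSup {r : ℝ | ∃ y ∈ Set.Icc (0:ℝ) 1, T^[k] y = x ∧
      r = ∑ j ∈ Finset.range k, (f (T^[j] y) - ergMax T f)} := rfl

private lemma ergMax_def' (T f : ℝ → ℝ) :
    ergMax T f = sSup {r : ℝ | ∃ μ : Measure ℝ, InvariantProb T μ ∧ r = ∫ x, f x ∂μ} := rfl

private lemma backchain {T : ℝ → ℝ} {b : ℕ → ℝ} (hb : ∀ k, T (b (k+1)) = b k) :
    ∀ n j, j ≤ n → T^[j] (b n) = b (n - j) := by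
  intro n j hj
  induction j with
  | zero => simp
  | succ i ih =>
    rw [Function.iterate_succ_apply', ih (by omega)]
    have h : n - i = (n - (i+1)) + 1 := by omega
    rw [h, hb]

set_option maxHeartbeats 2000000 in
theorem gSup_equicontinuous_and_bounded
    (T V ω Ω : ℝ → ℝ) (σ c lam ρTω C₈ : ℝ)
    (hσ : 0 < σ) (hc : c ∈ Ioo (0:ℝ) 1)
    (hTmaps : MapsTo T (Icc 0 1) (Icc 0 1))
    (hTleft : ∀ x ∈ Icc (0:ℝ) c, T x = x * (1 + V x))
    (hlim1 : Tendsto T (𝓝[<] c) (𝓝 1)) (hlim0 : Tendsto T (𝓝[>] c) (𝓝 0))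
    (hlam : 1 < lam)
    (hexp : ∀ x ∈ Ioc c 1, ∀ y ∈ Ioc c 1, lam * |x - y| ≤ |T x - T y|)
    (hVcont : ContinuousOn V (Ici 0)) (hVmono : StrictMonoOn V (Ici 0))
    (hVrange : ∀ x ∈ Ici (0:ℝ), 0 ≤ V x ∧ V x < 1) (hVpos : ∀ x > (0:ℝ), 0 < V x)
    (hVreg : RegVary0 V σ)
    (hωmod : ConcaveModulus ω)
    (hA : ∃ γ > (0:ℝ), ∃ ξ₀ > (1:ℝ), ∃ η₀ ∈ Ioo (0:ℝ) 1,
      ∀ h ∈ Ioo (0:ℝ) η₀, ∀ ξ ∈ Ioc (1:ℝ) ξ₀,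
        ξ ^ γ * (ω h / V h) ≤ ω (ξ * h) / V (ξ * h))
    (hΩmod : ConcaveModulus Ω)
    (hρTω : 0 < ρTω) (hC₈ : 0 < C₈)
    (hshadow : ∀ x : ℕ → ℝ, (∀ k, x k ∈ Icc (0:ℝ) 1) → (∀ k, T (x (k + 1)) = x k) →
      ∀ y₀ ∈ Icc (0:ℝ) 1, |x 0 - y₀| < ρTω →
        ∃ y : ℕ → ℝ, y 0 = y₀ ∧ (∀ k, y k ∈ Icc (0:ℝ) 1) ∧
          (∀ k, T (y (k + 1)) = y k) ∧
          ∀ k ≥ 1, Ω |x k - y k| + C₈ * ∑ j ∈ Finset.Icc 1 k, ω |x j - y j| ≤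
            Ω |x 0 - y₀|)
    (f : ℝ → ℝ)
    (hf : ∃ C > (0:ℝ), ∀ x ∈ Icc (0:ℝ) 1, ∀ y ∈ Icc (0:ℝ) 1, |f x - f y| ≤ C * ω |x - y|) :
    ∃ L > (0:ℝ), ∀ k : ℕ, 1 ≤ k →
      (∀ x ∈ Icc (0:ℝ) 1, ∀ y ∈ Icc (0:ℝ) 1,
        |gSup T f k x - gSup T f k y| ≤ L * C₈⁻¹ * omegaSeminorm ω f * Ω |x - y|) ∧
      (∀ x ∈ Icc (0:ℝ) 1, |gSup T f k x| ≤ 2 * L * C₈⁻¹ * omegaSeminorm ω f * Ω 1) := by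
  obtain ⟨hc0, hc1⟩ := hc
  obtain ⟨hωC, hωM, hω0, hωNN, -⟩ := hωmod
  obtain ⟨hΩC, hΩM, hΩ0, hΩNN, -⟩ := hΩmod
  obtain ⟨C, hCpos, hfC⟩ := hf
  have h0A : (0:ℝ) ∈ Icc (0:ℝ) 1 := by constructor <;> norm_num
  have h1A : (1:ℝ) ∈ Icc (0:ℝ) 1 := by constructor <;> norm_num
  have hT0 : T 0 = 0 := by
    have := hTleft 0 ⟨le_refl 0, hc0.le⟩
    simpa using this
  -- continuity of the left branch and T c = 1
  have hcontL : ContinuousOn (fun x : ℝ => x * (1 + V x)) (Icc 0 c) :=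
    continuous_id.continuousOn.mul
      (continuousOn_const.add (hVcont.mono (fun x hx => hx.1)))
  have hTc : T c = 1 := by
    have hcw : ContinuousWithinAt (fun x : ℝ => x * (1 + V x)) (Icc 0 c) c :=
      hcontL c (right_mem_Icc.2 hc0.le)
    have hmemI : Ioo 0 c ∈ 𝓝[<] c := Ioo_mem_nhdsLT_of_mem ⟨hc0, le_refl c⟩
    have hle : 𝓝[<] c ≤ 𝓝[Icc 0 c] c :=
      nhdsWithin_le_of_mem (mem_of_superset hmemI Ioo_subset_Icc_self)
    have h3 : Tendsto (fun x : ℝ => x * (1 + V x)) (𝓝[<] c) (𝓝 (c * (1 + V c))) :=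
      hcw.tendsto.mono_left hle
    have h4 : Tendsto T (𝓝[<] c) (𝓝 (c * (1 + V c))) := by
      apply h3.congr'
      filter_upwards [hmemI] with t ht
      exact (hTleft t ⟨ht.1.le, ht.2.le⟩).symm
    have h5 : c * (1 + V c) = 1 := tendsto_nhds_unique h4 hlim1
    rw [hTleft c ⟨hc0.le, le_refl c⟩, h5]
  -- surjectivity via the left branch
  have hsurj : ∀ w ∈ Icc (0:ℝ) 1, ∃ u ∈ Icc (0:ℝ) 1, T u = w := by
    intro w hw
    have hTcont : ContinuousOn T (Icc 0 c) :=
      hcontL.congr (fun x hx => hTleft x hx)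
    have := intermediate_value_Icc hc0.le hTcont
    rw [hT0, hTc] at this
    obtain ⟨u, hu, hTu⟩ := this hw
    exact ⟨u, ⟨hu.1, hu.2.trans hc1.le⟩, hTu⟩
  -- backward orbits
  have hback : ∀ z ∈ Icc (0:ℝ) 1, ∃ b : ℕ → ℝ,
      b 0 = z ∧ (∀ k, b k ∈ Icc (0:ℝ) 1) ∧ ∀ k, T (b (k+1)) = b k := by
    intro z hz
    choose g hg1 hg2 using hsurj
    let s : {w : ℝ // w ∈ Icc (0:ℝ) 1} → {w : ℝ // w ∈ Icc (0:ℝ) 1} :=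
      fun w => ⟨g w.1 w.2, hg1 w.1 w.2⟩
    refine ⟨fun k => (s^[k] ⟨z, hz⟩).1, rfl, fun k => (s^[k] ⟨z, hz⟩).2, fun k => ?_⟩
    show T (s^[k+1] ⟨z, hz⟩).1 = (s^[k] ⟨z, hz⟩).1
    rw [Function.iterate_succ_apply']
    exact hg2 _ _
  have hiter : ∀ z ∈ Icc (0:ℝ) 1, ∀ j, T^[j] z ∈ Icc (0:ℝ) 1 := by
    intro z hz j
    induction j with
    | zero => simpa using hz
    | succ i ih => rw [Function.iterate_succ_apply']; exact hTmaps ih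
  -- seminorm facts
  have hKbdd : BddAbove {q : ℝ | ∃ x ∈ Icc (0:ℝ) 1, ∃ y ∈ Icc (0:ℝ) 1, x ≠ y ∧
      q = |f x - f y| / ω |x - y|} := by
    refine ⟨max C 0, ?_⟩
    rintro q ⟨x, hx, y, hy, hxy, rfl⟩
    rcases eq_or_lt_of_le (hωNN |x - y| (abs_nonneg _)) with h0 | hpos
    · rw [← h0, div_zero]; exact le_max_right _ _
    · exact le_max_of_le_left ((div_le_iff₀ hpos).2 (hfC x hx y hy))
  have hK0 : 0 ≤ omegaSeminorm ω f := by
    have hmem : (|f 0 - f 1| / ω |0 - 1| : ℝ) ∈ {q : ℝ | ∃ x ∈ Icc (0:ℝ) 1,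
        ∃ y ∈ Icc (0:ℝ) 1, x ≠ y ∧ q = |f x - f y| / ω |x - y|} :=
      ⟨0, h0A, 1, h1A, by norm_num, rfl⟩
    exact le_trans (div_nonneg (abs_nonneg _) (hωNN _ (abs_nonneg _))) (le_csSup hKbdd hmem)
  have hKω : ∀ x ∈ Icc (0:ℝ) 1, ∀ y ∈ Icc (0:ℝ) 1,
      |f x - f y| ≤ omegaSeminorm ω f * ω |x - y| := by
    intro x hx y hy
    rcases eq_or_ne x y with rfl | hxy
    · simp [hω0]
    rcases eq_or_lt_of_le (hωNN |x - y| (abs_nonneg _)) with h0 | hpos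
    · have h1 := hfC x hx y hy
      rw [← h0] at h1 ⊢
      linarith
    · have hq : |f x - f y| / ω |x - y| ≤ omegaSeminorm ω f :=
        le_csSup hKbdd ⟨x, hx, y, hy, hxy, rfl⟩
      have := mul_le_mul_of_nonneg_right hq hpos.le
      rwa [div_mul_cancel₀ _ hpos.ne'] at this
  have hfbound : ∀ t ∈ Icc (0:ℝ) 1, |f t| ≤ |f 0| + omegaSeminorm ω f * ω 1 := by
    intro t ht
    have h1 := hKω t ht 0 h0A
    have h2 : |t - 0| ≤ 1 := by rw [sub_zero, abs_of_nonneg ht.1]; exact ht.2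
    have h3 : ω |t - 0| ≤ ω 1 := hωM (mem_Ici.2 (abs_nonneg _)) (by norm_num) h2
    have h4 : omegaSeminorm ω f * ω |t - 0| ≤ omegaSeminorm ω f * ω 1 :=
      mul_le_mul_of_nonneg_left h3 hK0
    have h5 := abs_sub_abs_le_abs_sub (f t) (f 0)
    linarith
  -- boundedness and nonemptiness of the gSup sets
  have hgB : ∀ (k : ℕ) (x : ℝ), BddAbove {r : ℝ | ∃ y ∈ Icc (0:ℝ) 1, T^[k] y = x ∧
      r = ∑ j ∈ Finset.range k, (f (T^[j] y) - ergMax T f)} := by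
    intro k x
    refine ⟨k * ((|f 0| + omegaSeminorm ω f * ω 1) + |ergMax T f|), ?_⟩
    rintro r ⟨y, hy, -, rfl⟩
    calc ∑ j ∈ Finset.range k, (f (T^[j] y) - ergMax T f)
        ≤ ∑ _j ∈ Finset.range k, ((|f 0| + omegaSeminorm ω f * ω 1) + |ergMax T f|) := by
          refine Finset.sum_le_sum (fun j _ => ?_)
          have h1 := hfbound _ (hiter y hy j)
          have h2 := le_abs_self (f (T^[j] y))
          have h3 := neg_abs_le (ergMax T f)
          have h4 := abs_le.1 h1
          linarith
      _ = k * ((|f 0| + omegaSeminorm ω f * ω 1) + |ergMax T f|) := by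
          rw [Finset.sum_const, Finset.card_range, nsmul_eq_mul]
  have hgNe : ∀ (k : ℕ), ∀ x ∈ Icc (0:ℝ) 1, Set.Nonempty {r : ℝ | ∃ y ∈ Icc (0:ℝ) 1,
      T^[k] y = x ∧ r = ∑ j ∈ Finset.range k, (f (T^[j] y) - ergMax T f)} := by
    intro k x hx
    obtain ⟨b, hb0, hbmem, hbstep⟩ := hback x hx
    have hbk : T^[k] (b k) = x := by
      have := backchain hbstep k k (le_refl k)
      rwa [Nat.sub_self, hb0] at this
    exact ⟨_, b k, hbmem k, hbk, rfl⟩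
  -- one-step Lipschitz estimate via shadowing
  have hstep : ∀ k, 1 ≤ k → ∀ x ∈ Icc (0:ℝ) 1, ∀ y ∈ Icc (0:ℝ) 1, |x - y| < ρTω →
      gSup T f k x ≤ gSup T f k y +
        omegaSeminorm ω f * (C₈⁻¹ * Ω |x - y|) := by
    intro k hk x hx y hy hd
    rw [gSup_def']
    refine csSup_le (hgNe k x hx) ?_
    rintro r ⟨z, hz, hzk, rfl⟩
    obtain ⟨b, hb0, hbmem, hbstep⟩ := hback z hz
    set X : ℕ → ℝ := fun i => if i ≤ k then T^[k - i] z else b (i - k) with hXdef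
    have hXmem : ∀ i, X i ∈ Icc (0:ℝ) 1 := by
      intro i
      by_cases h : i ≤ k
      · simp only [hXdef, if_pos h]; exact hiter z hz _
      · simp only [hXdef, if_neg h]; exact hbmem _
    have hXstep : ∀ i, T (X (i+1)) = X i := by
      intro i
      by_cases h1 : i + 1 ≤ k
      · have h2 : i ≤ k := by omega
        simp only [hXdef, if_pos h1, if_pos h2]
        rw [← Function.iterate_succ_apply' T (k - (i+1)) z]
        congr 1
        omega
      · by_cases h2 : i ≤ k
        · have hik : i = k := by omega
          subst hik
          simp only [hXdef, if_neg h1, if_pos h2, Nat.sub_self, Function.iterate_zero_apply]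
          have h3 : i + 1 - i = 1 := by omega
          rw [h3]
          have h4 := hbstep 0
          norm_num at h4
          rw [h4, hb0]
        · simp only [hXdef, if_neg h1, if_neg h2]
          have h3 : i + 1 - k = (i - k) + 1 := by omega
          rw [h3, hbstep]
    have hX0 : X 0 = x := by
      simp only [hXdef, if_pos (Nat.zero_le k), Nat.sub_zero]
      exact hzk
    obtain ⟨Y, hY0, hYmem, hYstep, hYineq⟩ :=
      hshadow X hXmem hXstep y hy (by rwa [hX0])
    have hineq := hYineq k hk
    rw [hX0] at hineq
    have hYk : T^[k] (Y k) = y := by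
      have := backchain hYstep k k (le_refl k)
      rwa [Nat.sub_self, hY0] at this
    have hmemr' : (∑ j ∈ Finset.range k, (f (T^[j] (Y k)) - ergMax T f)) ∈
        {r : ℝ | ∃ y' ∈ Icc (0:ℝ) 1, T^[k] y' = y ∧
          r = ∑ j ∈ Finset.range k, (f (T^[j] y') - ergMax T f)} :=
      ⟨Y k, hYmem k, hYk, rfl⟩
    have hr'le : (∑ j ∈ Finset.range k, (f (T^[j] (Y k)) - ergMax T f)) ≤ gSup T f k y := by
      rw [gSup_def']
      exact le_csSup (hgB k y) hmemr'
    have hXj : ∀ j, j < k → T^[j] z = X (k - j) := by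
      intro j hj
      simp only [hXdef, if_pos (Nat.sub_le k j), Nat.sub_sub_self hj.le]
    have hYj : ∀ j, j < k → T^[j] (Y k) = Y (k - j) :=
      fun j hj => backchain hYstep k j hj.le
    have hsum : (∑ j ∈ Finset.range k, (f (T^[j] z) - ergMax T f)) -
        (∑ j ∈ Finset.range k, (f (T^[j] (Y k)) - ergMax T f))
        = ∑ i ∈ Finset.Icc 1 k, (f (X i) - f (Y i)) := by
      rw [← Finset.sum_sub_distrib]
      refine Finset.sum_nbij' (fun j => k - j) (fun i => k - i) ?_ ?_ ?_ ?_ ?_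
      · intro a ha
        simp only [Finset.mem_range] at ha
        simp only [Finset.mem_Icc]
        omega
      · intro a ha
        simp only [Finset.mem_Icc] at ha
        simp only [Finset.mem_range]
        omega
      · intro a ha
        simp only [Finset.mem_range] at ha
        show k - (k - a) = a
        omega
      · intro a ha
        simp only [Finset.mem_Icc] at ha
        show k - (k - a) = a
        omega
      · intro a ha
        simp only [Finset.mem_range] at ha
        rw [hXj a ha, hYj a ha]
        ring
    have hsum2 : ∑ i ∈ Finset.Icc 1 k, (f (X i) - f (Y i)) ≤
        omegaSeminorm ω f * ∑ i ∈ Finset.Icc 1 k, ω |X i - Y i| := by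
      rw [Finset.mul_sum]
      refine Finset.sum_le_sum (fun i _ => ?_)
      exact le_trans (le_abs_self _) (hKω _ (hXmem i) _ (hYmem i))
    have hsumω : ∑ i ∈ Finset.Icc 1 k, ω |X i - Y i| ≤ C₈⁻¹ * Ω |x - y| := by
      have hΩnn := hΩNN |X k - Y k| (abs_nonneg _)
      rw [inv_mul_eq_div, le_div_iff₀ hC₈]
      nlinarith
    have hKsum : omegaSeminorm ω f * ∑ i ∈ Finset.Icc 1 k, ω |X i - Y i| ≤
        omegaSeminorm ω f * (C₈⁻¹ * Ω |x - y|) :=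
      mul_le_mul_of_nonneg_left hsumω hK0
    linarith
  -- chaining
  set N : ℕ := ⌈ρTω⁻¹⌉₊ + 1 with hNdef
  have hNpos : 0 < N := Nat.succ_pos _
  have hNr : (0:ℝ) < (N:ℝ) := by exact_mod_cast hNpos
  have hN1 : (1:ℝ) ≤ (N:ℝ) := by exact_mod_cast hNpos
  have hNρ : 1 / (N:ℝ) < ρTω := by
    rw [div_lt_iff₀ hNr]
    have h1 : ρTω⁻¹ < (N:ℝ) := lt_of_le_of_lt (Nat.le_ceil _)
      (by exact_mod_cast Nat.lt_succ_self _)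
    calc (1:ℝ) = ρTω * ρTω⁻¹ := by field_simp
      _ < ρTω * N := by exact mul_lt_mul_of_pos_left h1 hρTω
  have hlip : ∀ k, 1 ≤ k → ∀ x ∈ Icc (0:ℝ) 1, ∀ y ∈ Icc (0:ℝ) 1,
      |gSup T f k x - gSup T f k y| ≤ (N:ℝ) * C₈⁻¹ * omegaSeminorm ω f * Ω |x - y| := by
    intro k hk x hx y hy
    set p : ℕ → ℝ := fun i => x + (i : ℝ)/(N:ℝ) * (y - x) with hpdef
    have hpmem : ∀ i, i ≤ N → p i ∈ Icc (0:ℝ) 1 := by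
      intro i hi
      have ht0 : 0 ≤ (i:ℝ)/(N:ℝ) := by positivity
      have ht1 : (i:ℝ)/(N:ℝ) ≤ 1 := by
        rw [div_le_one hNr]; exact_mod_cast hi
      simp only [hpdef]
      constructor
      · nlinarith [hx.1, hx.2, hy.1, hy.2]
      · nlinarith [hx.1, hx.2, hy.1, hy.2]
    have hpdiff : ∀ i : ℕ, p (i+1) - p i = (y - x)/(N:ℝ) := by
      intro i
      simp only [hpdef]
      push_cast
      field_simp
      ring
    have hpstep : ∀ i : ℕ, |p i - p (i+1)| = |x - y|/(N:ℝ) := by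
      intro i
      rw [abs_sub_comm, hpdiff, abs_div, abs_of_pos hNr, abs_sub_comm]
    have hp0 : p 0 = x := by simp [hpdef]
    have hpN : p N = y := by
      simp only [hpdef]
      field_simp
      ring
    have hxy1 : |x - y| ≤ 1 := by
      rw [abs_le]
      constructor <;> nlinarith [hx.1, hx.2, hy.1, hy.2]
    have hsmall : ∀ i : ℕ, |p i - p (i+1)| < ρTω := by
      intro i
      rw [hpstep]
      calc |x - y|/(N:ℝ) ≤ 1/(N:ℝ) := (div_le_div_iff_of_pos_right hNr).2 hxy1
        _ < ρTω := hNρ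
    have hΩm : ∀ i : ℕ, Ω |p i - p (i+1)| ≤ Ω |x - y| := by
      intro i
      apply hΩM (mem_Ici.2 (abs_nonneg _)) (mem_Ici.2 (abs_nonneg _))
      rw [hpstep]
      exact div_le_self (abs_nonneg _) hN1
    have honestep : ∀ i, i < N →
        |gSup T f k (p i) - gSup T f k (p (i+1))| ≤
          omegaSeminorm ω f * (C₈⁻¹ * Ω |x - y|) := by
      intro i hi
      have h1 := hstep k hk (p i) (hpmem i hi.le) (p (i+1)) (hpmem (i+1) hi) (hsmall i)
      have h2 := hstep k hk (p (i+1)) (hpmem (i+1) hi) (p i) (hpmem i hi.le)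
        (by rw [abs_sub_comm]; exact hsmall i)
      have h3 : omegaSeminorm ω f * (C₈⁻¹ * Ω |p i - p (i+1)|) ≤
          omegaSeminorm ω f * (C₈⁻¹ * Ω |x - y|) := by
        apply mul_le_mul_of_nonneg_left _ hK0
        exact mul_le_mul_of_nonneg_left (hΩm i) (inv_nonneg.2 hC₈.le)
      have h4 : omegaSeminorm ω f * (C₈⁻¹ * Ω |p (i+1) - p i|) ≤
          omegaSeminorm ω f * (C₈⁻¹ * Ω |x - y|) := by
        rw [abs_sub_comm]
        exact h3
      rw [abs_sub_le_iff]
      constructor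
      · linarith
      · linarith
    calc |gSup T f k x - gSup T f k y|
        = dist (gSup T f k (p 0)) (gSup T f k (p N)) := by
          rw [hp0, hpN, Real.dist_eq]
      _ ≤ ∑ i ∈ Finset.range N, dist (gSup T f k (p i)) (gSup T f k (p (i+1))) :=
          dist_le_range_sum_dist (fun i => gSup T f k (p i)) N
      _ ≤ ∑ _i ∈ Finset.range N, omegaSeminorm ω f * (C₈⁻¹ * Ω |x - y|) := by
          refine Finset.sum_le_sum (fun i hi => ?_)
          rw [Real.dist_eq]
          exact honestep i (Finset.mem_range.1 hi)
      _ = (N:ℝ) * (omegaSeminorm ω f * (C₈⁻¹ * Ω |x - y|)) := by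
          rw [Finset.sum_const, Finset.card_range, nsmul_eq_mul]
      _ = (N:ℝ) * C₈⁻¹ * omegaSeminorm ω f * Ω |x - y| := by ring
  -- continuity of f on [0,1] and the clamped extension
  have hfA_cont : ContinuousOn f (Icc (0:ℝ) 1) := by
    intro a ha
    have htend : Tendsto (fun t => omegaSeminorm ω f * ω |t - a|) (𝓝[Icc (0:ℝ) 1] a) (𝓝 0) := by
      have h1 : Tendsto (fun t : ℝ => |t - a|) (𝓝[Icc (0:ℝ) 1] a) (𝓝[Ici 0] 0) := by
        rw [tendsto_nhdsWithin_iff]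
        constructor
        · have h2 : Tendsto (fun t : ℝ => |t - a|) (𝓝 a) (𝓝 |a - a|) :=
            ((continuous_id.sub continuous_const).abs).tendsto a
          simpa using h2.mono_left nhdsWithin_le_nhds
        · exact Filter.Eventually.of_forall (fun t => mem_Ici.2 (abs_nonneg _))
      have h2 : Tendsto ω (𝓝[Ici 0] 0) (𝓝 0) := by
        have h3 := hωC 0 self_mem_Ici
        rw [ContinuousWithinAt, hω0] at h3
        exact h3
      have h4 := (h2.comp h1).const_mul (omegaSeminorm ω f)
      simpa using h4
    have : Tendsto f (𝓝[Icc (0:ℝ) 1] a) (𝓝 (f a)) := by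
      rw [tendsto_iff_dist_tendsto_zero]
      apply squeeze_zero' (Filter.Eventually.of_forall (fun t => dist_nonneg)) ?_ htend
      filter_upwards [self_mem_nhdsWithin] with t ht
      rw [Real.dist_eq]
      exact hKω t ht a ha
    exact this
  set cl : ℝ → ℝ := fun t => max 0 (min 1 t) with hcldef
  have hclmem : ∀ t, cl t ∈ Icc (0:ℝ) 1 :=
    fun t => ⟨le_max_left _ _, max_le zero_le_one (min_le_left _ _)⟩
  have hclid : ∀ t ∈ Icc (0:ℝ) 1, cl t = t := by
    intro t ht
    simp only [hcldef]
    rw [min_eq_right ht.2, max_eq_right ht.1]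
  set F : ℝ → ℝ := fun t => f (cl t) with hFdef
  have hclcont : Continuous cl := continuous_const.max (continuous_const.min continuous_id)
  have hFcont : Continuous F := hfA_cont.comp_continuous hclcont hclmem
  have hFbd : ∀ t, |F t| ≤ |f 0| + omegaSeminorm ω f * ω 1 := fun t => hfbound _ (hclmem t)
  have hFeq : ∀ t ∈ Icc (0:ℝ) 1, F t = f t := by
    intro t ht
    simp only [hFdef]
    rw [hclid t ht]
  -- invariant measures: a.e. measurability of iterates and invariance
  have hInv : ∀ μ : Measure ℝ, InvariantProb T μ →
      (∀ j : ℕ, AEMeasurable (T^[j]) μ ∧ μ.map (T^[j]) = μ) ∧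
        (∀ᵐ z ∂μ, z ∈ Icc (0:ℝ) 1) := by
    rintro μ ⟨hprob, hconc, hinv⟩
    have hTae : AEMeasurable T μ := by
      by_contra hn
      rw [Measure.map_of_not_aemeasurable hn] at hinv
      have h1 : μ univ = 1 := hprob.measure_univ
      rw [← hinv] at h1
      simp at h1
    constructor
    · intro j
      induction j with
      | zero => exact ⟨aemeasurable_id, Measure.map_id⟩
      | succ i ih =>
        have h1 : AEMeasurable (T^[i]) (μ.map T) := by rw [hinv]; exact ih.1
        refine ⟨?_, ?_⟩
        · rw [Function.iterate_succ]
          exact h1.comp_aemeasurable hTae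
        · rw [Function.iterate_succ, ← AEMeasurable.map_map_of_aemeasurable h1 hTae, hinv, ih.2]
    · rw [ae_iff]
      have h1 : μ (Icc (0:ℝ) 1)ᶜ = 0 := by
        rw [measure_compl measurableSet_Icc (measure_ne_top μ _), hconc, hprob.measure_univ,
          tsub_self]
      exact h1
  -- integrals of F ∘ T^[j]
  have hint : ∀ μ : Measure ℝ, InvariantProb T μ → ∀ j : ℕ,
      Integrable (fun z => F (T^[j] z)) μ ∧ ∫ z, F (T^[j] z) ∂μ = ∫ z, F z ∂μ := by
    intro μ hμ j
    haveI : IsProbabilityMeasure μ := hμ.1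
    obtain ⟨hj, -⟩ := hInv μ hμ
    have hjm := (hj j).1
    have hmap := (hj j).2
    have haesm : AEStronglyMeasurable (fun z => F (T^[j] z)) μ :=
      (hFcont.measurable.comp_aemeasurable hjm).aestronglyMeasurable
    constructor
    · refine ⟨haesm, HasFiniteIntegral.of_bounded (C := |f 0| + omegaSeminorm ω f * ω 1) ?_⟩
      exact Filter.Eventually.of_forall (fun z => by
        rw [Real.norm_eq_abs]; exact hFbd (T^[j] z))
    · have h1 : ∫ w, F w ∂(μ.map (T^[j])) = ∫ z, F (T^[j] z) ∂μ :=
        integral_map hjm hFcont.aestronglyMeasurable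
      rw [← h1, hmap]
  have hFint : ∀ μ : Measure ℝ, InvariantProb T μ → Integrable F μ := by
    intro μ hμ
    have := (hint μ hμ 0).1
    simpa using this
  have hfF : ∀ μ : Measure ℝ, InvariantProb T μ → ∫ z, f z ∂μ = ∫ z, F z ∂μ := by
    intro μ hμ
    apply integral_congr_ae
    filter_upwards [(hInv μ hμ).2] with z hz
    exact (hFeq z hz).symm
  -- the dirac measure at 0 is invariant
  have hdirac : InvariantProb T (Measure.dirac 0) := by
    refine ⟨by infer_instance, Measure.dirac_apply_of_mem h0A, ?_⟩
    have hae : T =ᵐ[Measure.dirac 0] (fun _ => T 0) := by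
      rw [ae_dirac_eq]
      exact Filter.eventually_pure.2 rfl
    rw [Measure.map_congr hae, Measure.map_const, measure_univ, one_smul, hT0]
  -- the set defining ergMax
  have hESbdd : BddAbove {r : ℝ | ∃ μ : Measure ℝ, InvariantProb T μ ∧ r = ∫ x, f x ∂μ} := by
    refine ⟨|f 0| + omegaSeminorm ω f * ω 1, ?_⟩
    rintro r ⟨μ, hμ, rfl⟩
    haveI : IsProbabilityMeasure μ := hμ.1
    rw [hfF μ hμ]
    calc ∫ x, F x ∂μ ≤ ∫ _x, (|f 0| + omegaSeminorm ω f * ω 1 : ℝ) ∂μ := by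
          refine integral_mono_ae (hFint μ hμ) (integrable_const _) ?_
          exact Filter.Eventually.of_forall (fun z => (abs_le.1 (hFbd z)).2)
      _ = |f 0| + omegaSeminorm ω f * ω 1 := by simp
  have hESne : Set.Nonempty {r : ℝ | ∃ μ : Measure ℝ, InvariantProb T μ ∧ r = ∫ x, f x ∂μ} :=
    ⟨∫ x, f x ∂(Measure.dirac 0), Measure.dirac 0, hdirac, rfl⟩
  have hf0m : f 0 ≤ ergMax T f := by
    rw [ergMax_def']
    have hmem : f 0 ∈ {r : ℝ | ∃ μ : Measure ℝ, InvariantProb T μ ∧ r = ∫ x, f x ∂μ} :=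
      ⟨Measure.dirac 0, hdirac, (integral_dirac f 0).symm⟩
    exact le_csSup hESbdd hmem
  -- gSup at the fixed point 0
  have hTne0 : ∀ x ∈ Ioc c 1, T x ≠ 0 := by
    intro x hx
    have hlow : lam * (x - c) ≤ |T x| := by
      have hev : ∀ᶠ t in 𝓝[>] c, lam * |x - t| ≤ |T x - T t| := by
        filter_upwards [Ioo_mem_nhdsGT_of_mem (⟨le_refl c, hc1⟩ : c ∈ Ico c 1)] with t ht
        exact hexp x hx t ⟨ht.1, ht.2.le⟩
      have h1 : Tendsto (fun t => lam * |x - t|) (𝓝[>] c) (𝓝 (lam * |x - c|)) :=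
        ((continuous_const.mul (continuous_const.sub continuous_id).abs).tendsto c).mono_left
          nhdsWithin_le_nhds
      have h2 : Tendsto (fun t => |T x - T t|) (𝓝[>] c) (𝓝 |T x - 0|) :=
        (tendsto_const_nhds.sub hlim0).abs
      have h3 := le_of_tendsto_of_tendsto h1 h2 hev
      rw [sub_zero] at h3
      rwa [abs_of_pos (by linarith [hx.1] : (0:ℝ) < x - c)] at h3
    intro h0
    rw [h0, abs_zero] at hlow
    nlinarith [hx.1]
  have hzero : ∀ y ∈ Icc (0:ℝ) 1, T y = 0 → y = 0 := by
    intro y hy hTy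
    rcases le_or_gt y c with h | h
    · have h1 := hTleft y ⟨hy.1, h⟩
      rw [h1] at hTy
      rcases mul_eq_zero.1 hTy with h2 | h3
      · exact h2
      · exfalso
        have := (hVrange y hy.1).1
        linarith
    · exact absurd hTy (hTne0 y ⟨h, hy.2⟩)
  have hiterzero : ∀ (k : ℕ), ∀ y ∈ Icc (0:ℝ) 1, T^[k] y = 0 → y = 0 := by
    intro k
    induction k with
    | zero => intro y _ h; simpa using h
    | succ i ih =>
      intro y hy h
      rw [Function.iterate_succ_apply'] at h
      exact ih y hy (hzero _ (hiter y hy i) h)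
  have hg0 : ∀ k : ℕ, gSup T f k 0 = (k:ℝ) * (f 0 - ergMax T f) := by
    intro k
    have hset : {r : ℝ | ∃ y ∈ Icc (0:ℝ) 1, T^[k] y = (0:ℝ) ∧
        r = ∑ j ∈ Finset.range k, (f (T^[j] y) - ergMax T f)}
        = {(k:ℝ) * (f 0 - ergMax T f)} := by
      ext r
      simp only [mem_setOf_eq, mem_singleton_iff]
      constructor
      · rintro ⟨y, hy, hyk, rfl⟩
        have hy0 : y = 0 := hiterzero k y hy hyk
        subst hy0
        rw [Finset.sum_congr rfl (fun j _ => by rw [Function.iterate_fixed hT0 j]),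
          Finset.sum_const, Finset.card_range, nsmul_eq_mul]
      · rintro rfl
        refine ⟨0, h0A, Function.iterate_fixed hT0 k, ?_⟩
        rw [Finset.sum_congr rfl (fun j _ => by rw [Function.iterate_fixed hT0 j]),
          Finset.sum_const, Finset.card_range, nsmul_eq_mul]
    rw [gSup_def', hset, csSup_singleton]
  -- near-optimal points for gSup
  have hlow : ∀ k : ℕ, 1 ≤ k → ∀ η : ℝ, 0 < η → ∃ x₀ ∈ Icc (0:ℝ) 1, -η ≤ gSup T f k x₀ := by
    intro k hk η hη
    by_contra hcon
    push_neg at hcon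
    have hkr : (0:ℝ) < (k:ℝ) := by exact_mod_cast hk
    have key : ∀ μ : Measure ℝ, InvariantProb T μ → ∫ x, f x ∂μ ≤ ergMax T f - η / k := by
      intro μ hμ
      haveI : IsProbabilityMeasure μ := hμ.1
      have hGint : Integrable (fun z => ∑ j ∈ Finset.range k, F (T^[j] z)) μ :=
        integrable_finset_sum _ (fun j _ => (hint μ hμ j).1)
      have hGle : ∀ᵐ z ∂μ, (∑ j ∈ Finset.range k, F (T^[j] z)) - (k:ℝ) * ergMax T f ≤ -η := by
        filter_upwards [(hInv μ hμ).2] with z hz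
        have h3 : (∑ j ∈ Finset.range k, (f (T^[j] z) - ergMax T f))
            = (∑ j ∈ Finset.range k, F (T^[j] z)) - (k:ℝ) * ergMax T f := by
          rw [Finset.sum_sub_distrib, Finset.sum_const, Finset.card_range, nsmul_eq_mul]
          congr 1
          exact Finset.sum_congr rfl (fun j _ => (hFeq _ (hiter z hz j)).symm)
        rw [← h3]
        have hmem : (∑ j ∈ Finset.range k, (f (T^[j] z) - ergMax T f)) ∈
            {r : ℝ | ∃ y ∈ Icc (0:ℝ) 1, T^[k] y = T^[k] z ∧
              r = ∑ j ∈ Finset.range k, (f (T^[j] y) - ergMax T f)} := ⟨z, hz, rfl, rfl⟩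
        have h1 : (∑ j ∈ Finset.range k, (f (T^[j] z) - ergMax T f)) ≤ gSup T f k (T^[k] z) := by
          rw [gSup_def']
          exact le_csSup (hgB k _) hmem
        have h2 := hcon (T^[k] z) (hiter z hz k)
        linarith
      have hGint2 : ∫ z, ((∑ j ∈ Finset.range k, F (T^[j] z)) - (k:ℝ) * ergMax T f) ∂μ ≤
          ∫ _z, (-η : ℝ) ∂μ :=
        integral_mono_ae (hGint.sub (integrable_const _)) (integrable_const _) hGle
      rw [integral_sub hGint (integrable_const _), integral_const, integral_const,
        integral_finset_sum _ (fun j _ => (hint μ hμ j).1)] at hGint2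
      have hsum : ∑ j ∈ Finset.range k, ∫ z, F (T^[j] z) ∂μ = (k:ℝ) * ∫ z, F z ∂μ := by
        rw [Finset.sum_congr rfl (fun j _ => (hint μ hμ j).2), Finset.sum_const,
          Finset.card_range, nsmul_eq_mul]
      rw [hsum] at hGint2
      simp only [measure_univ, probReal_univ, ENNReal.toReal_one, smul_eq_mul, one_mul] at hGint2
      rw [hfF μ hμ]
      have h5 : ∫ z, F z ∂μ - ergMax T f ≤ -η / k := by
        rw [le_div_iff₀ hkr]
        linarith
      have h6 : -η / k = -(η / k) := by ring
      rw [h6] at h5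
      linarith
    have hcontr : ergMax T f ≤ ergMax T f - η / k := by
      rw [ergMax_def']
      refine csSup_le hESne ?_
      rintro r ⟨μ, hμ, rfl⟩
      exact key μ hμ
    have : 0 < η / k := div_pos hη hkr
    linarith
  -- final assembly
  refine ⟨(N:ℝ), hNr, ?_⟩
  intro k hk
  refine ⟨hlip k hk, ?_⟩
  intro x hx
  have hΩ1nn : 0 ≤ Ω 1 := hΩNN 1 zero_le_one
  have hcoef : 0 ≤ (N:ℝ) * C₈⁻¹ * omegaSeminorm ω f :=
    mul_nonneg (mul_nonneg hNr.le (inv_nonneg.2 hC₈.le)) hK0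
  have hB0 : 0 ≤ (N:ℝ) * C₈⁻¹ * omegaSeminorm ω f * Ω 1 := mul_nonneg hcoef hΩ1nn
  have habs1 : ∀ u ∈ Icc (0:ℝ) 1, ∀ v ∈ Icc (0:ℝ) 1, Ω |u - v| ≤ Ω 1 := by
    intro u hu v hv
    apply hΩM (mem_Ici.2 (abs_nonneg _)) (by norm_num : (1:ℝ) ∈ Ici 0)
    rw [abs_le]
    constructor <;> nlinarith [hu.1, hu.2, hv.1, hv.2]
  have hup : gSup T f k x ≤ (N:ℝ) * C₈⁻¹ * omegaSeminorm ω f * Ω 1 := by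
    have h1 := (abs_le.1 (hlip k hk x hx 0 h0A)).2
    have h2 := hg0 k
    have h3 : (k:ℝ) * (f 0 - ergMax T f) ≤ 0 :=
      mul_nonpos_of_nonneg_of_nonpos (Nat.cast_nonneg k) (by linarith)
    have h4 : (N:ℝ) * C₈⁻¹ * omegaSeminorm ω f * Ω |x - 0| ≤
        (N:ℝ) * C₈⁻¹ * omegaSeminorm ω f * Ω 1 :=
      mul_le_mul_of_nonneg_left (habs1 x hx 0 h0A) hcoef
    linarith
  have hlo : -((N:ℝ) * C₈⁻¹ * omegaSeminorm ω f * Ω 1) ≤ gSup T f k x := by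
    by_contra hcon
    push_neg at hcon
    set B := (N:ℝ) * C₈⁻¹ * omegaSeminorm ω f * Ω 1 with hBdef
    obtain ⟨x₀, hx₀, hgx₀⟩ := hlow k hk ((-B - gSup T f k x)/2) (by simp only [hBdef] at hcon ⊢; linarith)
    have h1 := (abs_le.1 (hlip k hk x hx x₀ hx₀)).1
    have h4 : (N:ℝ) * C₈⁻¹ * omegaSeminorm ω f * Ω |x - x₀| ≤ B :=
      mul_le_mul_of_nonneg_left (habs1 x hx x₀ hx₀) hcoef
    simp only [hBdef] at hcon h4 hgx₀ ⊢
    linarith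
  rw [abs_le]
  constructor
  · calc -(2 * (N:ℝ) * C₈⁻¹ * omegaSeminorm ω f * Ω 1)
        ≤ -((N:ℝ) * C₈⁻¹ * omegaSeminorm ω f * Ω 1) := by nlinarith
      _ ≤ gSup T f k x := hlo
  · calc gSup T f k x ≤ (N:ℝ) * C₈⁻¹ * omegaSeminorm ω f * Ω 1 := hup
      _ ≤ 2 * (N:ℝ) * C₈⁻¹ * omegaSeminorm ω f * Ω 1 := by nlinarith

end
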